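/- arXiv:2112.03026 — 6 statements merged into one kernel-verified Lean document; each statement's English description precedes it below -/
import Mathlib

section
/- The relation ≤_HZX is a total order on the set of IVIFNs: any two IVIFNs α and β satisfy α ≤_HZX β or β ≤_HZX α, and the relation is reflexive, antisymmetric, and transitive. -/
structure IVIFN where
  muL : ℝ
  muR : ℝ
  nuL : ℝ
  nuR : ℝ
  muL_nonneg : 0 ≤ muL
  mu_le : muL ≤ muR
  muR_le_one : muR ≤ 1
  nuL_nonneg : 0 ≤ nuL
  nu_le : nuL ≤ nuR
  nuR_le_one : nuR ≤ 1
  sum_le_one : muR + nuR ≤ 1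

noncomputable def Sf (a : IVIFN) : ℝ := (a.muL + a.muR) / 2 - (a.nuL + a.nuR) / 2
noncomputable def Hf (a : IVIFN) : ℝ := (a.muL + a.muR) / 2 + (a.nuL + a.nuR) / 2
noncomputable def E2 (a : IVIFN) : ℝ := (a.muR - a.muL + a.nuR - a.nuL) / 2
noncomputable def E3 (a : IVIFN) : ℝ := a.muR - a.muL

def ltHZX (a b : IVIFN) : Prop :=
  Sf a < Sf b ∨ (Sf a = Sf b ∧ (Hf a < Hf b ∨ (Hf a = Hf b ∧
    (E2 a < E2 b ∨ (E2 a = E2 b ∧ E3 a < E3 b)))))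

def leHZX (a b : IVIFN) : Prop := a = b ∨ ltHZX a b

lemma eq_of_stats (a b : IVIFN) (hS : Sf a = Sf b) (hH : Hf a = Hf b)
    (h2 : E2 a = E2 b) (h3 : E3 a = E3 b) : a = b := by
  cases a; cases b
  simp only [Sf, Hf, E2, E3] at hS hH h2 h3
  simp only [IVIFN.mk.injEq]
  constructor <;> [skip; constructor] <;> [skip; skip; constructor] <;> linarith

lemma lt_asymm' (a b : IVIFN) (h : ltHZX a b) (h' : ltHZX b a) : False := by
  unfold ltHZX at h h'
  rcases h with h | ⟨e1, h⟩ <;> rcases h' with h' | ⟨e1', h'⟩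
  · linarith
  · linarith
  · linarith
  rcases h with h | ⟨e2, h⟩ <;> rcases h' with h' | ⟨e2', h'⟩
  · linarith
  · linarith
  · linarith
  rcases h with h | ⟨e3, h⟩ <;> rcases h' with h' | ⟨e3', h'⟩
  · linarith
  · linarith
  · linarith
  · linarith

lemma ltHZX_trans (a b c : IVIFN) (h : ltHZX a b) (h' : ltHZX b c) : ltHZX a c := by
  unfold ltHZX at *
  rcases h with h | ⟨e1, h⟩ <;> rcases h' with h' | ⟨e1', h'⟩
  · exact Or.inl (lt_trans h h')
  · exact Or.inl (e1' ▸ h)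
  · exact Or.inl (e1 ▸ h')
  refine Or.inr ⟨e1.trans e1', ?_⟩
  rcases h with h | ⟨e2, h⟩ <;> rcases h' with h' | ⟨e2', h'⟩
  · exact Or.inl (lt_trans h h')
  · exact Or.inl (e2' ▸ h)
  · exact Or.inl (e2 ▸ h')
  refine Or.inr ⟨e2.trans e2', ?_⟩
  rcases h with h | ⟨e3, h⟩ <;> rcases h' with h' | ⟨e3', h'⟩
  · exact Or.inl (lt_trans h h')
  · exact Or.inl (e3' ▸ h)
  · exact Or.inl (e3 ▸ h')
  exact Or.inr ⟨e3.trans e3', lt_trans h h'⟩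

theorem leHZX_total_order :
    (∀ a b : IVIFN, leHZX a b ∨ leHZX b a) ∧
    (∀ a : IVIFN, leHZX a a) ∧
    (∀ a b : IVIFN, leHZX a b → leHZX b a → a = b) ∧
    (∀ a b c : IVIFN, leHZX a b → leHZX b c → leHZX a c) := by
  refine ⟨?_, fun a => Or.inl rfl, ?_, ?_⟩
  · intro a b
    rcases lt_trichotomy (Sf a) (Sf b) with h | e1 | h
    · exact Or.inl (Or.inr (Or.inl h))
    · rcases lt_trichotomy (Hf a) (Hf b) with h | e2 | h
      · exact Or.inl (Or.inr (Or.inr ⟨e1, Or.inl h⟩))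
      · rcases lt_trichotomy (E2 a) (E2 b) with h | e3 | h
        · exact Or.inl (Or.inr (Or.inr ⟨e1, Or.inr ⟨e2, Or.inl h⟩⟩))
        · rcases lt_trichotomy (E3 a) (E3 b) with h | e4 | h
          · exact Or.inl (Or.inr (Or.inr ⟨e1, Or.inr ⟨e2, Or.inr ⟨e3, h⟩⟩⟩))
          · exact Or.inl (Or.inl (eq_of_stats a b e1 e2 e3 e4))
          · exact Or.inr (Or.inr (Or.inr ⟨e1.symm, Or.inr ⟨e2.symm, Or.inr ⟨e3.symm, h⟩⟩⟩))
        · exact Or.inr (Or.inr (Or.inr ⟨e1.symm, Or.inr ⟨e2.symm, Or.inl h⟩⟩))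
      · exact Or.inr (Or.inr (Or.inr ⟨e1.symm, Or.inl h⟩))
    · exact Or.inr (Or.inr (Or.inl h))
  · intro a b h h'
    rcases h with rfl | h
    · rfl
    rcases h' with rfl | h'
    · rfl
    exact absurd (lt_asymm' a b h h') not_false
  · intro a b c h h'
    rcases h with rfl | h
    · exact h'
    rcases h' with rfl | h'
    · exact Or.inr h
    exact Or.inr (ltHZX_trans a b c h h')
end

section
/- An IVIFN α is completely determined by the four values S(α), H(α), E2(α), E3(α): if two IVIFNs α, β satisfy S(α)=S(β), H(α)=H(β), E2(α)=E2(β), and E3(α)=E3(β), then α = β. -/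
theorem IVIFN_determined (a b : IVIFN)
    (hS : Sf a = Sf b) (hH : Hf a = Hf b) (hE2 : E2 a = E2 b) (hE3 : E3 a = E3 b) :
    a = b := by
  cases a with
  | mk aML aMR aNL aNR _ _ _ _ _ _ _ =>
  cases b with
  | mk bML bMR bNL bNR _ _ _ _ _ _ _ =>
  simp only [Sf, Hf, E2, E3, IVIFN.mk.injEq] at *
  refine ⟨by linarith, by linarith, by linarith, by linarith⟩
end

section
/- For any real ξ₁ with −1 ≤ ξ₁ ≤ 0, the pair β = ⟨[0,0],[−ξ₁,−ξ₁]⟩ is an IVIFN with S(β) = ξ₁, H(β) = −ξ₁, E2(β) = 0, and E3(β) = 0; moreover any IVIFN γ with S(γ) = ξ₁ satisfies β ≤_HZX γ. -/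
theorem IVIFN.ext' {a b : IVIFN} (h1 : a.muL = b.muL) (h2 : a.muR = b.muR)
    (h3 : a.nuL = b.nuL) (h4 : a.nuR = b.nuR) : a = b := by
  cases a; cases b; simp_all

theorem least_with_score (ξ₁ : ℝ) (h1 : -1 ≤ ξ₁) (h2 : ξ₁ ≤ 0) :
    ∃ β : IVIFN, β.muL = 0 ∧ β.muR = 0 ∧ β.nuL = -ξ₁ ∧ β.nuR = -ξ₁ ∧
      Sf β = ξ₁ ∧ Hf β = -ξ₁ ∧ E2 β = 0 ∧ E3 β = 0 ∧
      ∀ γ : IVIFN, Sf γ = ξ₁ → leHZX β γ := by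
  refine ⟨⟨0, 0, -ξ₁, -ξ₁, le_refl 0, le_refl 0, zero_le_one, by linarith, le_refl _,
    by linarith, by linarith⟩, rfl, rfl, rfl, rfl, by simp [Sf], by simp [Hf],
    by simp [E2], by simp [E3], ?_⟩
  intro γ hS
  rcases lt_or_eq_of_le (show -ξ₁ ≤ (γ.nuL + γ.nuR) / 2 by
      have := γ.muL_nonneg; have := γ.mu_le; simp [Sf] at hS; linarith) with hn | hn
  · right; right
    constructor
    · simp [Sf]; simp [Sf] at hS; linarith
    · left; simp [Hf]; have := γ.muL_nonneg; have := γ.mu_le; linarith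
  · -- (nuL+nuR)/2 = -ξ₁, hence muL+muR = 0, hence muL = muR = 0
    have hmu : (γ.muL + γ.muR) / 2 = 0 := by simp [Sf] at hS; linarith
    have hmL : γ.muL = 0 := by have := γ.muL_nonneg; have := γ.mu_le; linarith
    have hmR : γ.muR = 0 := by have := γ.muL_nonneg; linarith
    rcases lt_or_eq_of_le γ.nu_le with hnu | hnu
    · right; right
      refine ⟨by simp [Sf] at hS ⊢; linarith, ?_⟩
      right
      refine ⟨by simp [Hf, hmL, hmR]; linarith, ?_⟩
      left; simp [E2, hmL, hmR]; linarith
    · -- nuL = nuR, so nuL = nuR = -ξ₁, γ = β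
      left
      exact IVIFN.ext' (show (0:ℝ) = γ.muL from hmL.symm) (show (0:ℝ) = γ.muR from hmR.symm)
        (show -ξ₁ = γ.nuL by linarith) (show -ξ₁ = γ.nuR by linarith)
end

section
/- Let ξ₁, ξ₂ be reals with |ξ₁| ≤ ξ₂ ≤ 1. Then β = ⟨[(ξ₁+ξ₂)/2,(ξ₁+ξ₂)/2],[(ξ₂−ξ₁)/2,(ξ₂−ξ₁)/2]⟩ is an IVIFN with S(β) = ξ₁, H(β) = ξ₂, E2(β) = 0, and E3(β) = 0; moreover any IVIFN γ with S(γ) = ξ₁ and H(γ) = ξ₂ satisfies β ≤_HZX γ. -/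
theorem least_with_score_accuracy (ξ₁ ξ₂ : ℝ) (h1 : |ξ₁| ≤ ξ₂) (h2 : ξ₂ ≤ 1) :
    ∃ β : IVIFN, β.muL = (ξ₁ + ξ₂) / 2 ∧ β.muR = (ξ₁ + ξ₂) / 2 ∧
      β.nuL = (ξ₂ - ξ₁) / 2 ∧ β.nuR = (ξ₂ - ξ₁) / 2 ∧
      Sf β = ξ₁ ∧ Hf β = ξ₂ ∧ E2 β = 0 ∧ E3 β = 0 ∧
      ∀ γ : IVIFN, Sf γ = ξ₁ → Hf γ = ξ₂ → leHZX β γ := by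
  obtain ⟨ha, hb⟩ := abs_le.mp h1
  refine ⟨⟨(ξ₁ + ξ₂) / 2, (ξ₁ + ξ₂) / 2, (ξ₂ - ξ₁) / 2, (ξ₂ - ξ₁) / 2,
    by linarith, le_refl _, by linarith, by linarith, le_refl _, by linarith, by linarith⟩,
    rfl, rfl, rfl, rfl, by simp [Sf]; ring, by simp [Hf]; ring, by simp [E2], by simp [E3],
    ?_⟩
  intro γ hS hH
  simp only [Sf, Hf] at hS hH
  by_cases hE2 : (γ.muR - γ.muL + γ.nuR - γ.nuL) / 2 > 0
  · right
    refine Or.inr ⟨by simp [Sf]; linarith, Or.inr ⟨by simp [Hf]; linarith, Or.inl ?_⟩⟩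
    simpa [E2] using hE2
  · have h3 := γ.mu_le
    have h4 := γ.nu_le
    have hmu : γ.muL = γ.muR := by linarith
    have hnu : γ.nuL = γ.nuR := by linarith
    left
    have e1 : γ.muL = (ξ₁ + ξ₂) / 2 := by linarith
    have e2 : γ.nuL = (ξ₂ - ξ₁) / 2 := by linarith
    cases γ
    simp_all
end

section
/- Let ξ₁, ξ₂, ξ₃, ξ₄ be reals satisfying (ξ₁+ξ₂)/2 − ξ₄/2 ≥ 0, (ξ₂−ξ₁)/2 − (2ξ₃−ξ₄)/2 ≥ 0, ξ₂ + ξ₃ ≤ 1, 0 ≤ ξ₄ ≤ 2ξ₃. Then β = ⟨[(ξ₁+ξ₂−ξ₄)/2,(ξ₁+ξ₂+ξ₄)/2],[(ξ₂−ξ₁)/2−(2ξ₃−ξ₄)/2,(ξ₂−ξ₁)/2+(2ξ₃−ξ₄)/2]⟩ is an IVIFN with S(β) = ξ₁, H(β) = ξ₂, E2(β) = ξ₃, and E3(β) = ξ₄. -/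
theorem exists_IVIFN_with_values (ξ₁ ξ₂ ξ₃ ξ₄ : ℝ)
    (h1 : (ξ₁ + ξ₂) / 2 - ξ₄ / 2 ≥ 0)
    (h2 : (ξ₂ - ξ₁) / 2 - (2 * ξ₃ - ξ₄) / 2 ≥ 0)
    (h3 : ξ₂ + ξ₃ ≤ 1) (h4 : 0 ≤ ξ₄) (h5 : ξ₄ ≤ 2 * ξ₃) :
    ∃ β : IVIFN, β.muL = (ξ₁ + ξ₂ - ξ₄) / 2 ∧ β.muR = (ξ₁ + ξ₂ + ξ₄) / 2 ∧
      β.nuL = (ξ₂ - ξ₁) / 2 - (2 * ξ₃ - ξ₄) / 2 ∧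
      β.nuR = (ξ₂ - ξ₁) / 2 + (2 * ξ₃ - ξ₄) / 2 ∧
      Sf β = ξ₁ ∧ Hf β = ξ₂ ∧ E2 β = ξ₃ ∧ E3 β = ξ₄ := by
  refine ⟨⟨(ξ₁ + ξ₂ - ξ₄) / 2, (ξ₁ + ξ₂ + ξ₄) / 2,
    (ξ₂ - ξ₁) / 2 - (2 * ξ₃ - ξ₄) / 2, (ξ₂ - ξ₁) / 2 + (2 * ξ₃ - ξ₄) / 2,
    by linarith, by linarith, by linarith, by linarith, by linarith, by linarith, by linarith⟩,
    rfl, rfl, rfl, rfl, ?_, ?_, ?_, ?_⟩ <;> simp [Sf, Hf, E2, E3] <;> ring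
end

section
/- The set of all IVIFNs equipped with the total order ≤_HZX is a complete lattice (hence a complete chain): every nonempty subset has a least upper bound and a greatest lower bound with respect to ≤_HZX. -/
namespace HZXaux

def e (a : IVIFN) : ℝ × ℝ × ℝ × ℝ := (a.muL, a.muR, a.nuL, a.nuR)

noncomputable def gS (p : ℝ × ℝ × ℝ × ℝ) : ℝ := (p.1 + p.2.1) / 2 - (p.2.2.1 + p.2.2.2) / 2
noncomputable def gH (p : ℝ × ℝ × ℝ × ℝ) : ℝ := (p.1 + p.2.1) / 2 + (p.2.2.1 + p.2.2.2) / 2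
noncomputable def gE2 (p : ℝ × ℝ × ℝ × ℝ) : ℝ := (p.2.1 - p.1 + p.2.2.2 - p.2.2.1) / 2
noncomputable def gE3 (p : ℝ × ℝ × ℝ × ℝ) : ℝ := p.2.1 - p.1

lemma hgS : ∀ a, Sf a = gS (e a) := fun _ => rfl
lemma hgH : ∀ a, Hf a = gH (e a) := fun _ => rfl
lemma hgE2 : ∀ a, E2 a = gE2 (e a) := fun _ => rfl
lemma hgE3 : ∀ a, E3 a = gE3 (e a) := fun _ => rfl

lemma c1 : Continuous fun p : ℝ × ℝ × ℝ × ℝ => p.1 := continuous_fst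
lemma c2 : Continuous fun p : ℝ × ℝ × ℝ × ℝ => p.2.1 := continuous_fst.comp continuous_snd
lemma c3 : Continuous fun p : ℝ × ℝ × ℝ × ℝ => p.2.2.1 :=
  continuous_fst.comp (continuous_snd.comp continuous_snd)
lemma c4 : Continuous fun p : ℝ × ℝ × ℝ × ℝ => p.2.2.2 :=
  continuous_snd.comp (continuous_snd.comp continuous_snd)

lemma gS_cont : Continuous gS := by unfold gS; fun_prop
lemma gH_cont : Continuous gH := by unfold gH; fun_prop
lemma gE2_cont : Continuous gE2 := by unfold gE2; fun_prop
lemma gE3_cont : Continuous gE3 := by unfold gE3; fun_prop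

def M : Set (ℝ × ℝ × ℝ × ℝ) := Set.range e

lemma M_eq : M = {p : ℝ × ℝ × ℝ × ℝ | 0 ≤ p.1 ∧ p.1 ≤ p.2.1 ∧ p.2.1 ≤ 1 ∧ 0 ≤ p.2.2.1 ∧
    p.2.2.1 ≤ p.2.2.2 ∧ p.2.2.2 ≤ 1 ∧ p.2.1 + p.2.2.2 ≤ 1} := by
  ext p
  constructor
  · rintro ⟨a, rfl⟩
    exact ⟨a.muL_nonneg, a.mu_le, a.muR_le_one, a.nuL_nonneg, a.nu_le, a.nuR_le_one, a.sum_le_one⟩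
  · obtain ⟨x, y, z, w⟩ := p
    rintro ⟨h1, h2, h3, h4, h5, h6, h7⟩
    exact ⟨⟨x, y, z, w, h1, h2, h3, h4, h5, h6, h7⟩, rfl⟩

lemma isClosed_M : IsClosed M := by
  rw [M_eq]
  simp only [Set.setOf_and]
  exact ((isClosed_le continuous_const c1).inter ((isClosed_le c1 c2).inter
    ((isClosed_le c2 continuous_const).inter ((isClosed_le continuous_const c3).inter
    ((isClosed_le c3 c4).inter ((isClosed_le c4 continuous_const).inter
    (isClosed_le (c2.add c4) continuous_const)))))))

lemma isCompact_M : IsCompact M := by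
  refine IsCompact.of_isClosed_subset (isCompact_Icc (a := ((0:ℝ),(0:ℝ),(0:ℝ),(0:ℝ)))
    (b := ((1:ℝ),(1:ℝ),(1:ℝ),(1:ℝ)))) isClosed_M ?_
  rintro _ ⟨a, rfl⟩
  have h1 := a.muL_nonneg; have h2 := a.mu_le; have h3 := a.muR_le_one
  have h4 := a.nuL_nonneg; have h5 := a.nu_le; have h6 := a.nuR_le_one
  simp only [Set.mem_Icc, Prod.le_def, e]
  refine ⟨⟨?_, ?_, ?_, ?_⟩, ?_, ?_, ?_, ?_⟩ <;> linarith

lemma image_subset_M (S : Set IVIFN) : e '' S ⊆ M := by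
  rintro _ ⟨a, _, rfl⟩; exact ⟨a, rfl⟩

lemma image_slice (C : Set IVIFN) (f : IVIFN → ℝ) (gf : ℝ × ℝ × ℝ × ℝ → ℝ)
    (hcomp : ∀ a, f a = gf (e a)) (c : ℝ) :
    e '' {v ∈ C | f v = c} = (e '' C) ∩ gf ⁻¹' {c} := by
  ext p
  constructor
  · rintro ⟨v, ⟨hv, hfv⟩, rfl⟩
    exact ⟨⟨v, hv, rfl⟩, by simpa [← hcomp v] using hfv⟩
  · rintro ⟨⟨v, hv, rfl⟩, hf⟩
    exact ⟨v, ⟨hv, by simpa [hcomp v] using hf⟩, rfl⟩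

lemma slice_cpt (C : Set IVIFN) (hc : IsCompact (e '' C)) (f : IVIFN → ℝ)
    (gf : ℝ × ℝ × ℝ × ℝ → ℝ) (hgf : Continuous gf) (hcomp : ∀ a, f a = gf (e a)) (c : ℝ) :
    IsCompact (e '' {v ∈ C | f v = c}) := by
  rw [image_slice C f gf hcomp c]
  exact hc.inter_right (isClosed_singleton.preimage hgf)

lemma image_comp_eq (C : Set IVIFN) (f : IVIFN → ℝ) (gf : ℝ × ℝ × ℝ × ℝ → ℝ)
    (hcomp : ∀ a, f a = gf (e a)) : f '' C = gf '' (e '' C) := by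
  rw [Set.image_image]
  exact congrArg (· '' C) (funext hcomp)

lemma bddAbove_image (S : Set IVIFN) (f : IVIFN → ℝ) (gf : ℝ × ℝ × ℝ × ℝ → ℝ)
    (hgf : Continuous gf) (hcomp : ∀ a, f a = gf (e a)) : BddAbove (f '' S) := by
  refine (isCompact_M.image hgf).bddAbove.mono ?_
  rw [image_comp_eq S f gf hcomp]
  exact Set.image_mono (image_subset_M S)

lemma min_attained (C : Set IVIFN) (hne : C.Nonempty) (hc : IsCompact (e '' C))
    (f : IVIFN → ℝ) (gf : ℝ × ℝ × ℝ × ℝ → ℝ) (hgf : Continuous gf)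
    (hcomp : ∀ a, f a = gf (e a)) :
    ∃ u ∈ C, ∀ v ∈ C, f u ≤ f v := by
  have himg : f '' C = gf '' (e '' C) := image_comp_eq C f gf hcomp
  have hcpt : IsCompact (f '' C) := by rw [himg]; exact hc.image hgf
  obtain ⟨u, hu, hfu⟩ := hcpt.sInf_mem (hne.image f)
  exact ⟨u, hu, fun v hv => hfu ▸ csInf_le hcpt.bddBelow ⟨v, hv, rfl⟩⟩

lemma sSup_closure (S : Set IVIFN) (hne : S.Nonempty) (f : IVIFN → ℝ)
    (gf : ℝ × ℝ × ℝ × ℝ → ℝ) (hgf : Continuous gf) (hcomp : ∀ a, f a = gf (e a)) :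
    ∃ u : IVIFN, e u ∈ closure (e '' S) ∧ f u = sSup (f '' S) := by
  have hsubM : e '' S ⊆ M := image_subset_M S
  have hclS : IsCompact (closure (e '' S)) :=
    isCompact_M.of_isClosed_subset isClosed_closure (closure_minimal hsubM isClosed_M)
  have hTc : IsCompact (gf '' closure (e '' S)) := hclS.image hgf
  have hsub : f '' S ⊆ gf '' closure (e '' S) := by
    rintro _ ⟨a, ha, rfl⟩
    exact ⟨e a, subset_closure ⟨a, ha, rfl⟩, (hcomp a).symm⟩
  have hmem : sSup (f '' S) ∈ closure (f '' S) :=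
    csSup_mem_closure (hne.image f) (hTc.bddAbove.mono hsub)
  have hT : sSup (f '' S) ∈ gf '' closure (e '' S) :=
    closure_minimal hsub hTc.isClosed hmem
  obtain ⟨p, hp, hfp⟩ := hT
  obtain ⟨u, hu⟩ : p ∈ M := closure_minimal hsubM isClosed_M hp
  refine ⟨u, hu ▸ hp, ?_⟩
  rw [hcomp u, hu, hfp]

lemma eq_of_closure (S : Set IVIFN) {u : IVIFN} (hu : e u ∈ closure (e '' S))
    (f : IVIFN → ℝ) (gf : ℝ × ℝ × ℝ × ℝ → ℝ) (hgf : Continuous gf)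
    (hcomp : ∀ a, f a = gf (e a)) {c : ℝ} (hall : ∀ a ∈ S, f a = c) : f u = c := by
  have hsub : e '' S ⊆ gf ⁻¹' {c} := by
    rintro _ ⟨a, ha, rfl⟩
    simp [← hcomp a, hall a ha]
  have := closure_minimal hsub (isClosed_singleton.preimage hgf) hu
  rw [hcomp u]
  simpa using this

lemma ivifn_ext {a b : IVIFN} (h1 : a.muL = b.muL) (h2 : a.muR = b.muR)
    (h3 : a.nuL = b.nuL) (h4 : a.nuR = b.nuR) : a = b := by
  cases a; cases b; simp_all

lemma key_inj {a b : IVIFN} (hS : Sf a = Sf b) (hH : Hf a = Hf b)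
    (hE2 : E2 a = E2 b) (hE3 : E3 a = E3 b) : a = b := by
  simp only [Sf, Hf, E2, E3] at hS hH hE2 hE3
  exact ivifn_ext (by linarith) (by linarith) (by linarith) (by linarith)

lemma le_S {a b : IVIFN} (h : leHZX a b) : Sf a ≤ Sf b := by
  rcases h with rfl | h
  · exact le_refl _
  rcases h with h | ⟨h, _⟩
  · exact le_of_lt h
  · exact le_of_eq h

lemma le_H {a b : IVIFN} (h : leHZX a b) (hS : Sf a = Sf b) : Hf a ≤ Hf b := by
  rcases h with rfl | h
  · exact le_refl _
  rcases h with h | ⟨_, h | ⟨h, _⟩⟩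
  · exact absurd hS (ne_of_lt h)
  · exact le_of_lt h
  · exact le_of_eq h

lemma le_E2 {a b : IVIFN} (h : leHZX a b) (hS : Sf a = Sf b) (hH : Hf a = Hf b) :
    E2 a ≤ E2 b := by
  rcases h with rfl | h
  · exact le_refl _
  rcases h with h | ⟨_, h | ⟨_, h | ⟨h, _⟩⟩⟩
  · exact absurd hS (ne_of_lt h)
  · exact absurd hH (ne_of_lt h)
  · exact le_of_lt h
  · exact le_of_eq h

lemma le_E3 {a b : IVIFN} (h : leHZX a b) (hS : Sf a = Sf b) (hH : Hf a = Hf b)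
    (hE2 : E2 a = E2 b) : E3 a ≤ E3 b := by
  rcases h with rfl | h
  · exact le_refl _
  rcases h with h | ⟨_, h | ⟨_, h | ⟨_, h⟩⟩⟩
  · exact absurd hS (ne_of_lt h)
  · exact absurd hH (ne_of_lt h)
  · exact absurd hE2 (ne_of_lt h)
  · exact le_of_lt h

lemma lt1 {a b : IVIFN} (h : Sf a < Sf b) : leHZX a b := Or.inr (Or.inl h)
lemma lt2 {a b : IVIFN} (hS : Sf a = Sf b) (h : Hf a < Hf b) : leHZX a b :=
  Or.inr (Or.inr ⟨hS, Or.inl h⟩)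
lemma lt3 {a b : IVIFN} (hS : Sf a = Sf b) (hH : Hf a = Hf b) (h : E2 a < E2 b) : leHZX a b :=
  Or.inr (Or.inr ⟨hS, Or.inr ⟨hH, Or.inl h⟩⟩)
lemma le4 {a b : IVIFN} (hS : Sf a = Sf b) (hH : Hf a = Hf b) (hE2 : E2 a = E2 b)
    (h : E3 a ≤ E3 b) : leHZX a b := by
  rcases lt_or_eq_of_le h with h' | h'
  · exact Or.inr (Or.inr ⟨hS, Or.inr ⟨hH, Or.inr ⟨hE2, h'⟩⟩⟩)
  · exact Or.inl (key_inj hS hH hE2 h')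

def bot : IVIFN :=
  ⟨0, 0, 1, 1, le_refl 0, le_refl 0, zero_le_one, zero_le_one, le_refl 1, le_refl 1, by norm_num⟩

lemma bot_le (a : IVIFN) : leHZX bot a := by
  have h1 := a.muL_nonneg; have h2 := a.mu_le; have h5 := a.nu_le; have h6 := a.nuR_le_one
  have hbot : Sf bot = -1 := by norm_num [Sf, bot]
  have hge : -1 ≤ Sf a := by unfold Sf; linarith
  rcases lt_or_eq_of_le hge with h | h
  · exact lt1 (by rw [hbot]; exact h)
  · refine Or.inl ?_
    unfold Sf at h
    have h3 := a.nuL_nonneg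
    exact (ivifn_ext (a := a) (b := bot) (by simp [bot]; linarith) (by simp [bot]; linarith)
      (by simp [bot]; linarith) (by simp [bot]; linarith)).symm

lemma exists_min (C : Set IVIFN) (hne : C.Nonempty) (hcpt : IsCompact (e '' C)) :
    ∃ u ∈ C, ∀ v ∈ C, leHZX u v := by
  obtain ⟨u1, hu1, hmin1⟩ := min_attained C hne hcpt Sf gS gS_cont hgS
  set C1 : Set IVIFN := {v ∈ C | Sf v = Sf u1} with hC1def
  have hne1 : C1.Nonempty := ⟨u1, hu1, rfl⟩
  have hcpt1 : IsCompact (e '' C1) := slice_cpt C hcpt Sf gS gS_cont hgS _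
  obtain ⟨u2, hu2, hmin2⟩ := min_attained C1 hne1 hcpt1 Hf gH gH_cont hgH
  set C2 : Set IVIFN := {v ∈ C1 | Hf v = Hf u2} with hC2def
  have hne2 : C2.Nonempty := ⟨u2, hu2, rfl⟩
  have hcpt2 : IsCompact (e '' C2) := slice_cpt C1 hcpt1 Hf gH gH_cont hgH _
  obtain ⟨u3, hu3, hmin3⟩ := min_attained C2 hne2 hcpt2 E2 gE2 gE2_cont hgE2
  set C3 : Set IVIFN := {v ∈ C2 | E2 v = E2 u3} with hC3def
  have hne3 : C3.Nonempty := ⟨u3, hu3, rfl⟩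
  have hcpt3 : IsCompact (e '' C3) := slice_cpt C2 hcpt2 E2 gE2 gE2_cont hgE2 _
  obtain ⟨u4, hu4, hmin4⟩ := min_attained C3 hne3 hcpt3 E3 gE3 gE3_cont hgE3
  obtain ⟨⟨⟨hu4C, hu4S⟩, hu4H⟩, hu4E2⟩ := hu4
  refine ⟨u4, hu4C, fun v hv => ?_⟩
  rcases lt_or_eq_of_le (hmin1 v hv) with h | h
  · exact lt1 (by rw [hu4S]; exact h)
  · have hv1 : v ∈ C1 := ⟨hv, h.symm⟩
    rcases lt_or_eq_of_le (hmin2 v hv1) with h2 | h2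
    · exact lt2 (by rw [hu4S, h]) (by rw [hu4H]; exact h2)
    · have hv2 : v ∈ C2 := ⟨hv1, h2.symm⟩
      rcases lt_or_eq_of_le (hmin3 v hv2) with h3 | h3
      · exact lt3 (by rw [hu4S, h]) (by rw [hu4H, h2]) (by rw [hu4E2]; exact h3)
      · have hv3 : v ∈ C3 := ⟨hv2, h3.symm⟩
        exact le4 (by rw [hu4S, h]) (by rw [hu4H, h2]) (by rw [hu4E2, h3]) (hmin4 v hv3)

lemma exists_lub (Ω : Set IVIFN) (hne : Ω.Nonempty) :
    ∃ u : IVIFN, (∀ a ∈ Ω, leHZX a u) ∧ ∀ v : IVIFN, (∀ a ∈ Ω, leHZX a v) → leHZX u v := by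
  classical
  have hMc : IsCompact (e '' (Set.univ : Set IVIFN)) := by
    rw [Set.image_univ]; exact isCompact_M
  set s := sSup (Sf '' Ω) with hs
  have hbddS : BddAbove (Sf '' Ω) := bddAbove_image Ω Sf gS gS_cont hgS
  have haS : ∀ a ∈ Ω, Sf a ≤ s := fun a ha => le_csSup hbddS ⟨a, ha, rfl⟩
  have hvS : ∀ v : IVIFN, (∀ a ∈ Ω, leHZX a v) → s ≤ Sf v := fun v hv =>
    csSup_le (hne.image Sf) (by rintro _ ⟨a, ha, rfl⟩; exact le_S (hv a ha))
  by_cases hA : ∃ a ∈ Ω, Sf a = s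
  · set Ω1 : Set IVIFN := {a ∈ Ω | Sf a = s} with hΩ1
    have hne1 : Ω1.Nonempty := by obtain ⟨a, ha, h⟩ := hA; exact ⟨a, ha, h⟩
    set h := sSup (Hf '' Ω1) with hh
    have hbddH : BddAbove (Hf '' Ω1) := bddAbove_image Ω1 Hf gH gH_cont hgH
    have haH : ∀ a ∈ Ω1, Hf a ≤ h := fun a ha => le_csSup hbddH ⟨a, ha, rfl⟩
    have hvH : ∀ v : IVIFN, (∀ a ∈ Ω, leHZX a v) → Sf v = s → h ≤ Hf v := fun v hv hvs =>
      csSup_le (hne1.image Hf) (by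
        rintro _ ⟨a, ⟨ha, has⟩, rfl⟩
        exact le_H (hv a ha) (has.trans hvs.symm))
    by_cases hB : ∃ a ∈ Ω1, Hf a = h
    · set Ω2 : Set IVIFN := {a ∈ Ω1 | Hf a = h} with hΩ2
      have hne2 : Ω2.Nonempty := by obtain ⟨a, ha, hH⟩ := hB; exact ⟨a, ha, hH⟩
      set ev := sSup (E2 '' Ω2) with hev
      have hbddE : BddAbove (E2 '' Ω2) := bddAbove_image Ω2 E2 gE2 gE2_cont hgE2
      have haE : ∀ a ∈ Ω2, E2 a ≤ ev := fun a ha => le_csSup hbddE ⟨a, ha, rfl⟩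
      have hvE : ∀ v : IVIFN, (∀ a ∈ Ω, leHZX a v) → Sf v = s → Hf v = h → ev ≤ E2 v :=
        fun v hv hvs hvh => csSup_le (hne2.image E2) (by
          rintro _ ⟨a, ⟨⟨ha, has⟩, hah⟩, rfl⟩
          exact le_E2 (hv a ha) (has.trans hvs.symm) (hah.trans hvh.symm))
      by_cases hC : ∃ a ∈ Ω2, E2 a = ev
      · set Ω3 : Set IVIFN := {a ∈ Ω2 | E2 a = ev} with hΩ3
        have hne3 : Ω3.Nonempty := by obtain ⟨a, ha, hE⟩ := hC; exact ⟨a, ha, hE⟩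
        have hbddT : BddAbove (E3 '' Ω3) := bddAbove_image Ω3 E3 gE3 gE3_cont hgE3
        have haT : ∀ a ∈ Ω3, E3 a ≤ sSup (E3 '' Ω3) := fun a ha => le_csSup hbddT ⟨a, ha, rfl⟩
        obtain ⟨u, hucl, huT⟩ := sSup_closure Ω3 hne3 E3 gE3 gE3_cont hgE3
        have huS : Sf u = s := eq_of_closure Ω3 hucl Sf gS gS_cont hgS
          (fun a ha => ha.1.1.2)
        have huH : Hf u = h := eq_of_closure Ω3 hucl Hf gH gH_cont hgH
          (fun a ha => ha.1.2)
        have huE : E2 u = ev := eq_of_closure Ω3 hucl E2 gE2 gE2_cont hgE2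
          (fun a ha => ha.2)
        refine ⟨u, fun a ha => ?_, fun v hv => ?_⟩
        · rcases lt_or_eq_of_le (haS a ha) with hlt | heq
          · exact lt1 (by rw [huS]; exact hlt)
          · have ha1 : a ∈ Ω1 := ⟨ha, heq⟩
            rcases lt_or_eq_of_le (haH a ha1) with hlt | heq2
            · exact lt2 (heq.trans huS.symm) (by rw [huH]; exact hlt)
            · have ha2 : a ∈ Ω2 := ⟨ha1, heq2⟩
              rcases lt_or_eq_of_le (haE a ha2) with hlt | heq3
              · exact lt3 (heq.trans huS.symm) (heq2.trans huH.symm) (by rw [huE]; exact hlt)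
              · have ha3 : a ∈ Ω3 := ⟨ha2, heq3⟩
                exact le4 (heq.trans huS.symm) (heq2.trans huH.symm) (heq3.trans huE.symm)
                  (by rw [huT]; exact haT a ha3)
        · rcases lt_or_eq_of_le (hvS v hv) with hlt | heqv
          · exact lt1 (by rw [huS]; exact hlt)
          · rcases lt_or_eq_of_le (hvH v hv heqv.symm) with hlt | heqh
            · exact lt2 (huS.trans heqv) (by rw [huH]; exact hlt)
            · rcases lt_or_eq_of_le (hvE v hv heqv.symm heqh.symm) with hlt | heqe
              · exact lt3 (huS.trans heqv) (huH.trans heqh) (by rw [huE]; exact hlt)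
              · have hvt : sSup (E3 '' Ω3) ≤ E3 v := csSup_le (hne3.image E3) (by
                  rintro _ ⟨a, ⟨⟨⟨ha, has⟩, hah⟩, hae⟩, rfl⟩
                  exact le_E3 (hv a ha) (has.trans heqv) (hah.trans heqh) (hae.trans heqe))
                exact le4 (huS.trans heqv) (huH.trans heqh) (huE.trans heqe)
                  (by rw [huT]; exact hvt)
      · -- E2 sup not attained
        obtain ⟨u2, hu2cl, hu2E⟩ := sSup_closure Ω2 hne2 E2 gE2 gE2_cont hgE2
        have hu2S : Sf u2 = s := eq_of_closure Ω2 hu2cl Sf gS gS_cont hgS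
          (fun a ha => ha.1.2)
        have hu2H : Hf u2 = h := eq_of_closure Ω2 hu2cl Hf gH gH_cont hgH
          (fun a ha => ha.2)
        set K1 : Set IVIFN := {v ∈ (Set.univ : Set IVIFN) | Sf v = s} with hK1
        have hK1c : IsCompact (e '' K1) := slice_cpt _ hMc Sf gS gS_cont hgS _
        set K2 : Set IVIFN := {v ∈ K1 | Hf v = h} with hK2
        have hK2c : IsCompact (e '' K2) := slice_cpt _ hK1c Hf gH gH_cont hgH _
        set K3 : Set IVIFN := {v ∈ K2 | E2 v = ev} with hK3
        have hK3c : IsCompact (e '' K3) := slice_cpt _ hK2c E2 gE2 gE2_cont hgE2 _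
        have hK3ne : K3.Nonempty := ⟨u2, ⟨⟨Set.mem_univ _, hu2S⟩, hu2H⟩, hu2E⟩
        obtain ⟨u, hu, hmin⟩ := exists_min K3 hK3ne hK3c
        obtain ⟨⟨⟨-, huS⟩, huH⟩, huE⟩ := hu
        refine ⟨u, fun a ha => ?_, fun v hv => ?_⟩
        · rcases lt_or_eq_of_le (haS a ha) with hlt | heq
          · exact lt1 (by rw [huS]; exact hlt)
          · have ha1 : a ∈ Ω1 := ⟨ha, heq⟩
            rcases lt_or_eq_of_le (haH a ha1) with hlt | heq2
            · exact lt2 (heq.trans huS.symm) (by rw [huH]; exact hlt)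
            · have ha2 : a ∈ Ω2 := ⟨ha1, heq2⟩
              have hlt : E2 a < ev := lt_of_le_of_ne (haE a ha2) (fun hb => hC ⟨a, ha2, hb⟩)
              exact lt3 (heq.trans huS.symm) (heq2.trans huH.symm) (by rw [huE]; exact hlt)
        · rcases lt_or_eq_of_le (hvS v hv) with hlt | heqv
          · exact lt1 (by rw [huS]; exact hlt)
          · rcases lt_or_eq_of_le (hvH v hv heqv.symm) with hlt | heqh
            · exact lt2 (huS.trans heqv) (by rw [huH]; exact hlt)
            · rcases lt_or_eq_of_le (hvE v hv heqv.symm heqh.symm) with hlt | heqe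
              · exact lt3 (huS.trans heqv) (huH.trans heqh) (by rw [huE]; exact hlt)
              · exact hmin v ⟨⟨⟨Set.mem_univ _, heqv.symm⟩, heqh.symm⟩, heqe.symm⟩
    · -- Hf sup not attained
      obtain ⟨u1, hu1cl, hu1H⟩ := sSup_closure Ω1 hne1 Hf gH gH_cont hgH
      have hu1S : Sf u1 = s := eq_of_closure Ω1 hu1cl Sf gS gS_cont hgS
        (fun a ha => ha.2)
      set K1 : Set IVIFN := {v ∈ (Set.univ : Set IVIFN) | Sf v = s} with hK1
      have hK1c : IsCompact (e '' K1) := slice_cpt _ hMc Sf gS gS_cont hgS _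
      set K2 : Set IVIFN := {v ∈ K1 | Hf v = h} with hK2
      have hK2c : IsCompact (e '' K2) := slice_cpt _ hK1c Hf gH gH_cont hgH _
      have hK2ne : K2.Nonempty := ⟨u1, ⟨Set.mem_univ _, hu1S⟩, hu1H⟩
      obtain ⟨u, hu, hmin⟩ := exists_min K2 hK2ne hK2c
      obtain ⟨⟨-, huS⟩, huH⟩ := hu
      refine ⟨u, fun a ha => ?_, fun v hv => ?_⟩
      · rcases lt_or_eq_of_le (haS a ha) with hlt | heq
        · exact lt1 (by rw [huS]; exact hlt)
        · have ha1 : a ∈ Ω1 := ⟨ha, heq⟩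
          have hlt : Hf a < h := lt_of_le_of_ne (haH a ha1) (fun hb => hB ⟨a, ha1, hb⟩)
          exact lt2 (heq.trans huS.symm) (by rw [huH]; exact hlt)
      · rcases lt_or_eq_of_le (hvS v hv) with hlt | heqv
        · exact lt1 (by rw [huS]; exact hlt)
        · rcases lt_or_eq_of_le (hvH v hv heqv.symm) with hlt | heqh
          · exact lt2 (huS.trans heqv) (by rw [huH]; exact hlt)
          · exact hmin v ⟨⟨Set.mem_univ _, heqv.symm⟩, heqh.symm⟩
  · -- Sf sup not attained
    obtain ⟨u0, hu0cl, hu0S⟩ := sSup_closure Ω hne Sf gS gS_cont hgS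
    set K1 : Set IVIFN := {v ∈ (Set.univ : Set IVIFN) | Sf v = s} with hK1
    have hK1c : IsCompact (e '' K1) := slice_cpt _ hMc Sf gS gS_cont hgS _
    have hK1ne : K1.Nonempty := ⟨u0, Set.mem_univ _, hu0S⟩
    obtain ⟨u, hu, hmin⟩ := exists_min K1 hK1ne hK1c
    obtain ⟨-, huS⟩ := hu
    refine ⟨u, fun a ha => ?_, fun v hv => ?_⟩
    · have hlt : Sf a < s := lt_of_le_of_ne (haS a ha) (fun hb => hA ⟨a, ha, hb⟩)
      exact lt1 (by rw [huS]; exact hlt)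
    · rcases lt_or_eq_of_le (hvS v hv) with hlt | heqv
      · exact lt1 (by rw [huS]; exact hlt)
      · exact hmin v ⟨Set.mem_univ _, heqv.symm⟩

end HZXaux

theorem HZX_complete :
    ∀ Ω : Set IVIFN, Ω.Nonempty →
      (∃ u : IVIFN, (∀ a ∈ Ω, leHZX a u) ∧
        ∀ v : IVIFN, (∀ a ∈ Ω, leHZX a v) → leHZX u v) ∧
      (∃ l : IVIFN, (∀ a ∈ Ω, leHZX l a) ∧
        ∀ m : IVIFN, (∀ a ∈ Ω, leHZX m a) → leHZX m l) := by
  intro Ω hne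
  constructor
  · exact HZXaux.exists_lub Ω hne
  · set L : Set IVIFN := {m | ∀ a ∈ Ω, leHZX m a} with hL
    have hLne : L.Nonempty := ⟨HZXaux.bot, fun a _ => HZXaux.bot_le a⟩
    obtain ⟨l, hub, hleast⟩ := HZXaux.exists_lub L hLne
    refine ⟨l, fun a ha => ?_, fun m hm => hub m hm⟩
    exact hleast a (fun m hm => hm a ha)
end
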